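/- Suppose b = 1, ε and a are real with ε² − a² < 2, and set ω₀ = √(2 − ε² + a²) and τ₀ = (1/ω₀)·arccos((1 − (1 + εa)ω₀²)/(1 + a²ω₀²)). If moreover ε + a(1 − ω₀²) ≥ 0, then Δ(iω₀, τ₀) = 0; together with Δ(0, τ₀) = 0, the characteristic equation thus has a zero root and a pair of purely imaginary roots ±iω₀ at τ = τ₀. -/

import Mathlib

open Complex

/-- The characteristic function Δ(λ, τ) = λ² − ελ + 1 − (aλ + b)·exp(−λτ) of the
linearized van der Pol equation with delayed feedback. -/
noncomputable def charFn (ε a b τ : ℝ) (lam : ℂ) : ℂ :=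
  lam ^ 2 - (ε : ℂ) * lam + 1 - ((a : ℂ) * lam + (b : ℂ)) * Complex.exp (-lam * (τ : ℂ))

/-- For b = 1 with ε² − a² < 2, setting ω₀ = √(2 − ε² + a²) and
τ₀ = (1/ω₀)·arccos((1 − (1 + εa)ω₀²)/(1 + a²ω₀²)), if ε + a(1 − ω₀²) ≥ 0 then
Δ(iω₀, τ₀) = 0; together with Δ(0, τ₀) = 0, the characteristic equation has a zero root
and a pair of purely imaginary roots ±iω₀ at τ = τ₀. -/
theorem zero_hopf_roots (ε a b ω₀ τ₀ : ℝ) (hb : b = 1) (h2 : ε ^ 2 - a ^ 2 < 2)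
    (hω : ω₀ = Real.sqrt (2 - ε ^ 2 + a ^ 2))
    (hτ : τ₀ = (1 / ω₀) *
      Real.arccos ((1 - (1 + ε * a) * ω₀ ^ 2) / (1 + a ^ 2 * ω₀ ^ 2)))
    (hs : 0 ≤ ε + a * (1 - ω₀ ^ 2)) :
    charFn ε a b τ₀ (Complex.I * (ω₀ : ℂ)) = 0 ∧ charFn ε a b τ₀ 0 = 0 := by
  subst hb
  have hwpos : (0:ℝ) < 2 - ε ^ 2 + a ^ 2 := by linarith
  have hω0 : 0 < ω₀ := by rw [hω]; exact Real.sqrt_pos.mpr hwpos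
  have hw : ω₀ ^ 2 = 2 - ε ^ 2 + a ^ 2 := by rw [hω]; exact Real.sq_sqrt hwpos.le
  set w : ℝ := ω₀ ^ 2 with hwdef
  set N : ℝ := 1 - (1 + ε * a) * w with hN
  set D : ℝ := 1 + a ^ 2 * w with hD
  have hwp : 0 < w := by rw [hw]; exact hwpos
  have hDpos : 0 < D := by positivity
  set S : ℝ := ε + a * (1 - w) with hS
  have hkey : N ^ 2 + w * S ^ 2 = D ^ 2 := by rw [hN, hD, hS, hw]; ring
  have hSnn : 0 ≤ S := hs
  set c : ℝ := N / D with hc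
  have hc1 : -1 ≤ c := by
    rw [hc, le_div_iff₀ hDpos]
    nlinarith [mul_nonneg hwp.le (sq_nonneg S), sq_nonneg (N + D)]
  have hc2 : c ≤ 1 := by
    rw [hc, div_le_one hDpos]
    nlinarith [mul_nonneg hwp.le (sq_nonneg S), sq_nonneg (N - D)]
  have hssq : 1 - c ^ 2 = (ω₀ * S / D) ^ 2 := by
    rw [hc]
    field_simp
    nlinarith [hkey]
  have hsin : Real.sqrt (1 - c ^ 2) = ω₀ * S / D := by
    rw [hssq]
    exact Real.sqrt_sq (by positivity)
  have hθ : ω₀ * τ₀ = Real.arccos c := by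
    rw [hτ]; field_simp
  -- compute the exponential
  have hexp : Complex.exp (-(Complex.I * (ω₀ : ℂ)) * (τ₀ : ℂ)) =
      (c : ℂ) - ((ω₀ * S / D : ℝ) : ℂ) * Complex.I := by
    have h1 : -(Complex.I * (ω₀ : ℂ)) * (τ₀ : ℂ) = ((-(ω₀ * τ₀) : ℝ) : ℂ) * Complex.I := by
      push_cast; ring
    rw [h1, Complex.exp_mul_I, ← Complex.ofReal_cos, ← Complex.ofReal_sin]
    rw [Real.cos_neg, Real.sin_neg, hθ, Real.cos_arccos hc1 hc2, Real.sin_arccos, hsin]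
    push_cast; ring
  constructor
  · rw [charFn, hexp]
    have hre : 1 - w - c - a * ω₀ * (ω₀ * S / D) = 0 := by
      rw [hc, hS, hN, hD]
      field_simp
      ring
    have him : -(ε * ω₀) + (ω₀ * S / D) - a * ω₀ * c = 0 := by
      rw [hc, hS, hN, hD]
      field_simp
      ring
    have hI : Complex.I ^ 2 = -1 := Complex.I_sq
    have expand : (Complex.I * (ω₀:ℂ)) ^ 2 - (ε:ℂ) * (Complex.I * (ω₀:ℂ)) + 1 -
        ((a:ℂ) * (Complex.I * (ω₀:ℂ)) + ((1:ℝ):ℂ)) * ((c:ℂ) - ((ω₀ * S / D : ℝ):ℂ) * Complex.I) =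
        (((1 - w - c - a * ω₀ * (ω₀ * S / D) : ℝ)) : ℂ) +
        (((-(ε * ω₀) + (ω₀ * S / D) - a * ω₀ * c : ℝ)) : ℂ) * Complex.I := by
      have hwc : ((w:ℝ):ℂ) = ((ω₀:ℂ)) ^ 2 := by rw [hwdef]; push_cast; ring
      push_cast
      rw [show ((ω₀:ℂ))^2 = w from by rw [hwdef]; push_cast; ring] at *
      push_cast
      ring_nf
      rw [hI]
      push_cast
      rw [hwdef]; push_cast; ring
    rw [expand, hre, him]
    simp
  · rw [charFn]
    simp
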